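/- Fix an integer m ≥ 0 and ε > 0. Let X_1,…,X_K be identically distributed unbounded random variables with continuous CDF F that are m-dependent, let M_K be a sequence of integers with M_K/K → 0 and M_K ≥ (m+1)(e+ε)·ln K, set δ_K = q̄_F(M_K/(e(K+m+1))) where q̄_F(p) = min{x : F(x) ≥ 1 − p}, and let 𝓜_K = {k : X_k ≥ X_{(K−M_K+1)}} be the (random) set of M_K-best indices. Then there exists K₀ such that for every K > K₀ and every deterministic subset 𝓔 ⊆ {1,…,K} with |𝓔| = E: (i) P(X_{(K−M_K+1)} > δ_K) ≤ (m+1)/K^{1+ε/3}; and (ii) P(𝓜_K ∩ 𝓔 = ∅) ≤ (m+1)·exp(−(M_K/(e(m+1)))·(1 − (m+1)/K)/(1 + (m+1)/K)) + (1 − M_K/(e(K+m+1)))^{E/(m+1)}. -/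

import Mathlib

open MeasureTheory ProbabilityTheory Filter

/-- The cumulative distribution function of a real random variable `X` under `μ`. -/
noncomputable def cdfOf {Ω : Type*} [MeasurableSpace Ω] (μ : Measure Ω) (X : Ω → ℝ) : ℝ → ℝ :=
  fun x => (μ {ω | X ω ≤ x}).toReal

/-- `orderStat v j` is the `j`-th smallest value (1-indexed) among `v 0, …, v (K-1)`. -/
noncomputable def orderStat {K : ℕ} (v : Fin K → ℝ) (j : ℕ) : ℝ :=
  ((Finset.univ.val.map v).sort (· ≤ ·)).getD (j - 1) 0

/-- A finite family of random variables is `m`-dependent: every subfamily whose indices are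
pairwise more than `m` apart is jointly independent. -/
def MDepFam {Ω β : Type*} [MeasurableSpace Ω] [MeasurableSpace β] (μ : Measure Ω) (m : ℕ)
    {K : ℕ} (X : Fin K → Ω → β) : Prop :=
  ∀ S : Finset (Fin K),
    (∀ i ∈ S, ∀ j ∈ S, i ≠ j → (m : ℤ) < |(i : ℤ) - (j : ℤ)|) →
    iIndepFun (fun i : S => X i.1) μ

/-- `F` has an exponentially-dominated tail with parameters `(α, β, lam, γ)`:
`(1 - F x)/(α x^β e^{-lam x^γ}) → 1` as `x → ∞`. -/
def ExpDomTail (F : ℝ → ℝ) (α β lam γ : ℝ) : Prop :=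
  Tendsto (fun x : ℝ => (1 - F x) / (α * x ^ β * Real.exp (-lam * x ^ γ))) atTop (nhds 1)

/-- Tail quantile function `q̄_F(p) = min {x | F x ≥ 1 - p}` (as an infimum). -/
noncomputable def tailQuantile (F : ℝ → ℝ) (p : ℝ) : ℝ := sInf {x | 1 - p ≤ F x}

lemma count_ge_of_orderStat_gt {K : ℕ} (v : Fin K → ℝ) (δ : ℝ) (Mk : ℕ)
    (hM1 : 1 ≤ Mk) (hMK : Mk ≤ K)
    (h : δ < orderStat v (K - Mk + 1)) :
    Mk ≤ (Finset.univ.filter fun k => δ < v k).card := by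
  classical
  set l : List ℝ := ((Finset.univ.val.map v).sort (· ≤ ·)) with hl
  have hlen : l.length = K := by
    simp [hl, Multiset.length_sort]
  have hsort : l.Pairwise (· ≤ ·) := Multiset.pairwise_sort _ _
  have hidx : K - Mk < l.length := by
    rw [hlen]; omega
  have hget : δ < l[K - Mk] := by
    have : orderStat v (K - Mk + 1) = l.getD (K - Mk) 0 := by
      simp [orderStat, hl]
    rw [this, List.getD_eq_getElem l 0 hidx] at h
    exact h
  -- all elements of l.drop (K - Mk) are > δ
  have hdrop : ∀ x ∈ l.drop (K - Mk), δ < x := by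
    intro x hx
    rw [← List.getElem_cons_drop hidx] at hx
    rcases List.mem_cons.mp hx with rfl | hx
    · exact hget
    · have hsub : (l.drop (K - Mk)).Sublist l := List.drop_sublist _ _
      have : (l[K - Mk] :: l.drop (K - Mk + 1)).Pairwise (· ≤ ·) := by
        rw [List.getElem_cons_drop hidx]
        exact hsort.sublist (List.drop_sublist _ _)
      exact lt_of_lt_of_le hget (List.rel_of_pairwise_cons this hx)
  have hcount : Mk ≤ l.countP (fun x => decide (δ < x)) := by
    have h1 : (l.drop (K - Mk)).countP (fun x => decide (δ < x)) = (l.drop (K - Mk)).length :=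
      List.countP_eq_length.mpr (by intro a ha; simpa using hdrop a ha)
    have h2 : (l.drop (K - Mk)).length = Mk := by
      rw [List.length_drop, hlen]; omega
    calc Mk = (l.drop (K - Mk)).countP (fun x => decide (δ < x)) := by rw [h1, h2]
    _ ≤ l.countP (fun x => decide (δ < x)) := (List.drop_sublist _ _).countP_le
  -- relate countP of l to card of filter
  have hms : (l : Multiset ℝ) = Finset.univ.val.map v := Multiset.sort_eq _ _
  have : l.countP (fun x => decide (δ < x)) =
      (Finset.univ.filter fun k => δ < v k).card := by
    have : Multiset.countP (fun x => δ < x) (l : Multiset ℝ) =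
        Multiset.countP (fun x => δ < x) (Finset.univ.val.map v) := by rw [hms]
    rw [Multiset.countP_map, Multiset.coe_countP] at this
    rw [this]
    rfl
  omega

lemma tq_facts (F : ℝ → ℝ) (hFcont : Continuous F)
    (htop : Tendsto F atTop (nhds 1)) (hbot : Tendsto F atBot (nhds 0))
    (p : ℝ) (hp0 : 0 < p) (hp1 : p < 1) :
    1 - p ≤ F (tailQuantile F p) ∧ ∀ x, x < tailQuantile F p → F x < 1 - p := by
  set S := {x | 1 - p ≤ F x} with hS
  have hclosed : IsClosed S := (isClosed_Ici (a := 1 - p)).preimage hFcont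
  have hne : S.Nonempty := by
    have : ∀ᶠ x in atTop, 1 - p ≤ F x := htop.eventually (eventually_ge_nhds (by linarith))
    exact this.exists
  have hbdd : BddBelow S := by
    have : ∀ᶠ x in atBot, F x < 1 - p := hbot.eventually (eventually_lt_nhds (by linarith))
    obtain ⟨a, ha⟩ := eventually_atBot.mp this
    refine ⟨a, fun y hy => ?_⟩
    by_contra hya
    exact absurd hy.out (not_le.mpr (ha y (le_of_not_ge hya)))
  have hmem : tailQuantile F p ∈ S := hclosed.csInf_mem hne hbdd
  refine ⟨hmem, fun x hx => ?_⟩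
  by_contra hcon
  exact absurd (csInf_le hbdd (not_lt.mp hcon)) (not_le.mpr hx)

lemma cdfOf_tendsto {Ω : Type*} [MeasurableSpace Ω] (μ : Measure Ω) [IsProbabilityMeasure μ]
    (X : Ω → ℝ) (hX : Measurable X) :
    Tendsto (cdfOf μ X) atTop (nhds 1) ∧ Tendsto (cdfOf μ X) atBot (nhds 0) := by
  have hinst : IsProbabilityMeasure (μ.map X) := Measure.isProbabilityMeasure_map hX.aemeasurable
  have hmap : cdfOf μ X = fun x => ProbabilityTheory.cdf (μ.map X) x := by
    funext x
    rw [ProbabilityTheory.cdf_eq_real, measureReal_def]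
    unfold cdfOf
    rw [Measure.map_apply hX measurableSet_Iic]
    rfl
  rw [hmap]
  exact ⟨tendsto_cdf_atTop _, tendsto_cdf_atBot _⟩

lemma meas_lt_le {Ω : Type*} [MeasurableSpace Ω] (μ : Measure Ω) [IsProbabilityMeasure μ]
    (X : Ω → ℝ) (δ c : ℝ) (hc : 0 ≤ c)
    (h : ∀ x, x < δ → (μ {ω | X ω ≤ x}).toReal ≤ c) :
    μ {ω | X ω < δ} ≤ ENNReal.ofReal c := by
  have hset : {ω | X ω < δ} = ⋃ n : ℕ, {ω | X ω ≤ δ - 1/(n+1)} := by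
    ext ω
    simp only [Set.mem_setOf_eq, Set.mem_iUnion]
    constructor
    · intro hω
      obtain ⟨n, hn⟩ := exists_nat_one_div_lt (sub_pos.mpr hω)
      exact ⟨n, by push_cast at hn ⊢; linarith⟩
    · rintro ⟨n, hn⟩
      have h0 : (0:ℝ) < 1/((n:ℝ)+1) := by positivity
      linarith
  have hmono : Monotone (fun n : ℕ => {ω | X ω ≤ δ - 1/(n+1)}) := by
    intro a b hab ω hω
    have h1 : 1/((b:ℝ)+1) ≤ 1/((a:ℝ)+1) := by
      apply one_div_le_one_div_of_le (by positivity)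
      exact_mod_cast by omega
    simp only [Set.mem_setOf_eq] at hω ⊢
    linarith
  rw [hset, hmono.measure_iUnion]
  refine iSup_le fun n => ?_
  refine (ENNReal.le_ofReal_iff_toReal_le (measure_ne_top _ _) hc).mpr (h _ ?_)
  have h0 : (0:ℝ) < 1/((n:ℝ)+1) := by positivity
  linarith

lemma spacing_of_mod {m K : ℕ} {i j : Fin K} (hij : i ≠ j)
    (hmod : (i : ℕ) % (m+1) = (j : ℕ) % (m+1)) : (m : ℤ) < |(i : ℤ) - (j : ℤ)| := by
  have hmodeq : (j : ℕ) ≡ (i : ℕ) [MOD m+1] := hmod.symm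
  have hdvd : ((m+1 : ℕ) : ℤ) ∣ ((i : ℤ) - (j : ℤ)) := by
    have := hmodeq.dvd
    exact_mod_cast this
  have hne : (i : ℤ) - (j : ℤ) ≠ 0 := by
    intro hc
    apply hij
    have : (i : ℤ) = (j : ℤ) := by linarith
    exact Fin.ext (by exact_mod_cast this)
  have habs : ((m+1 : ℕ) : ℤ) ∣ |(i : ℤ) - (j : ℤ)| := (dvd_abs _ _).mpr hdvd
  have := Int.le_of_dvd (abs_pos.mpr hne) habs
  push_cast at this ⊢
  linarith

lemma class_card_le {m K : ℕ} (C : Finset (Fin K)) (r : ℕ)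
    (hC : ∀ k ∈ C, (k : ℕ) % (m+1) = r) :
    C.card ≤ K / (m+1) + 1 := by
  have : C.card ≤ (Finset.range (K/(m+1)+1)).card := by
    refine Finset.card_le_card_of_injOn (fun k => (k : ℕ)/(m+1)) (fun k _ => ?_) ?_
    · rw [Finset.mem_coe, Finset.mem_range]
      exact Nat.lt_succ_of_le (Nat.div_le_div_right k.isLt.le)
    · intro k1 h1 k2 h2 hdiv
      have e1 : (k1:ℕ) % (m+1) = r := hC k1 (Finset.mem_coe.mp h1)
      have e2 : (k2:ℕ) % (m+1) = r := hC k2 (Finset.mem_coe.mp h2)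
      have hdiv' : (k1:ℕ)/(m+1) = (k2:ℕ)/(m+1) := by simpa using hdiv
      apply Fin.ext
      conv_lhs => rw [← Nat.div_add_mod (k1:ℕ) (m+1)]
      conv_rhs => rw [← Nat.div_add_mod (k2:ℕ) (m+1)]
      rw [hdiv', e1, e2]
  simpa using this

lemma class_chernoff {Ω : Type} [MeasurableSpace Ω] {μ : Measure Ω} [IsProbabilityMeasure μ]
    {K : ℕ} (X : Fin K → Ω → ℝ) (hmeas : ∀ k, Measurable (X k))
    (C : Finset (Fin K))
    (hind : iIndepFun (fun i : C => X i.1) μ)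
    (δ p : ℝ) (hp0 : 0 ≤ p) (hp : ∀ k, (μ {ω | δ < X k ω}).toReal ≤ p)
    (t : ℕ) :
    (μ {ω | (t : ℝ) ≤ ∑ k ∈ C, (if δ < X k ω then (1:ℝ) else 0)}).toReal ≤
      Real.exp (-(t:ℝ) + (Real.exp 1 - 1) * p * C.card) := by
  classical
  set Y : Fin K → Ω → ℝ := fun k ω => if δ < X k ω then 1 else 0 with hY
  have hYmeas : ∀ k, Measurable (Y k) := fun k =>
    Measurable.ite (measurableSet_lt measurable_const (hmeas k)) measurable_const
      measurable_const
  have hYind : iIndepFun (fun i : C => Y i.1) μ := by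
    exact hind.comp (fun _ => fun x : ℝ => if δ < x then (1:ℝ) else 0)
      (fun _ => Measurable.ite measurableSet_Ioi measurable_const measurable_const)
  set g : Ω → ℝ := fun ω => ∑ k ∈ C, Y k ω with hg
  have hgmeas : Measurable g := Finset.measurable_sum _ (fun k _ => hYmeas k)
  have hgsum : g = ∑ i ∈ Finset.univ, (fun i : C => Y i.1) i := by
    funext ω
    rw [Finset.sum_apply]
    exact (Finset.sum_coe_sort C (fun k => Y k ω)).symm
  have hYbound : ∀ k ω, 0 ≤ Y k ω ∧ Y k ω ≤ 1 := by
    intro k ω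
    simp only [hY]
    split <;> norm_num
  have hgbound : ∀ ω, g ω ≤ C.card := by
    intro ω
    calc g ω ≤ ∑ k ∈ C, (1:ℝ) := Finset.sum_le_sum (fun k _ => (hYbound k ω).2)
    _ = C.card := by simp
  have hint : Integrable (fun ω => Real.exp (1 * g ω)) μ := by
    refine Integrable.mono' (integrable_const (Real.exp C.card))
      ((hgmeas.const_mul 1).exp.aestronglyMeasurable) (ae_of_all _ fun ω => ?_)
    rw [Real.norm_eq_abs, abs_of_pos (Real.exp_pos _), one_mul]
    exact Real.exp_le_exp.mpr (hgbound ω)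
  have hchern := measure_ge_le_exp_mul_mgf (μ := μ) (X := g) (t := 1) (t : ℝ)
    zero_le_one hint
  -- mgf bound
  have hmgf_cell : ∀ k : Fin K, mgf (Y k) μ 1 ≤ Real.exp ((Real.exp 1 - 1) * p) := by
    intro k
    have hA : MeasurableSet {ω | δ < X k ω} := measurableSet_lt measurable_const (hmeas k)
    have hYind_eq : Y k = Set.indicator {ω | δ < X k ω} (fun _ => (1:ℝ)) := by
      funext ω
      simp only [hY, Set.indicator_apply, Set.mem_setOf_eq]
    have hYint : Integrable (Y k) μ := by
      rw [hYind_eq]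
      exact (integrable_const (1:ℝ)).indicator hA
    have heq : (fun ω => Real.exp (1 * Y k ω)) =
        fun ω => 1 + (Real.exp 1 - 1) * Y k ω := by
      funext ω
      simp only [hY]
      split
      · simp
      · simp
    have hint_eq : mgf (Y k) μ 1 = 1 + (Real.exp 1 - 1) * (μ {ω | δ < X k ω}).toReal := by
      rw [mgf, heq, integral_add (integrable_const 1) (hYint.const_mul _),
        integral_const, MeasureTheory.integral_const_mul]
      have : ∫ ω, Y k ω ∂μ = (μ {ω | δ < X k ω}).toReal := by
        rw [hYind_eq]
        have : Set.indicator {ω | δ < X k ω} (fun _ => (1:ℝ)) =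
            Set.indicator {ω | δ < X k ω} 1 := rfl
        rw [this, MeasureTheory.integral_indicator_one hA, measureReal_def]
      rw [this]
      simp [measure_univ]
    rw [hint_eq]
    have hq0 : 0 ≤ (μ {ω | δ < X k ω}).toReal := ENNReal.toReal_nonneg
    have he1 : (0:ℝ) ≤ Real.exp 1 - 1 := by
      have := Real.one_le_exp (le_refl 0 |>.trans zero_le_one)
      linarith [Real.one_le_exp (zero_le_one)]
    calc 1 + (Real.exp 1 - 1) * (μ {ω | δ < X k ω}).toReal
        ≤ 1 + (Real.exp 1 - 1) * p := by nlinarith [hp k]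
    _ ≤ Real.exp ((Real.exp 1 - 1) * p) := by
        have := Real.add_one_le_exp ((Real.exp 1 - 1) * p)
        linarith
  have hmgf : mgf g μ 1 ≤ Real.exp ((Real.exp 1 - 1) * p) ^ C.card := by
    rw [hgsum, hYind.mgf_sum (fun i => hYmeas i.1)]
    calc ∏ i : C, mgf (Y i.1) μ 1 ≤ ∏ _i : C, Real.exp ((Real.exp 1 - 1) * p) :=
      Finset.prod_le_prod (fun i _ => mgf_nonneg) (fun i _ => hmgf_cell i.1)
    _ = Real.exp ((Real.exp 1 - 1) * p) ^ C.card := by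
        rw [Finset.prod_const, Finset.card_univ, Fintype.card_coe]
  calc (μ {ω | (t : ℝ) ≤ ∑ k ∈ C, (if δ < X k ω then (1:ℝ) else 0)}).toReal
      ≤ Real.exp (-1 * t) * mgf g μ 1 := hchern
  _ ≤ Real.exp (-1 * t) * Real.exp ((Real.exp 1 - 1) * p) ^ C.card := by
      exact mul_le_mul_of_nonneg_left hmgf (Real.exp_pos _).le
  _ = Real.exp (-(t:ℝ) + (Real.exp 1 - 1) * p * C.card) := by
      rw [← Real.exp_nat_mul, ← Real.exp_add]
      ring_nf

set_option maxHeartbeats 2000000 in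
/-- for identically `F`-distributed (continuous, unbounded), `m`-dependent
`X_1,…,X_K`, with `M_K/K → 0`, `M_K ≥ (m+1)(e+ε) ln K`, and
`δ_K = q̄_F(M_K/(e(K+m+1)))`, there is `K₀` such that for all `K > K₀`:
(i) `P(X_{(K-M_K+1)} > δ_K) ≤ (m+1)/K^{1+ε/3}`; and (ii) for every deterministic
`𝓔 ⊆ {1,…,K}` of size `E`, `P(𝓜_K ∩ 𝓔 = ∅) ≤
(m+1) exp(-(M_K/(e(m+1)))·(1-(m+1)/K)/(1+(m+1)/K)) + (1 - M_K/(e(K+m+1)))^{E/(m+1)}`,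
where `𝓜_K = {k | X_k ≥ X_{(K-M_K+1)}}`. -/
theorem stmt_19 (m : ℕ) (ε : ℝ) (hε : 0 < ε)
    (F : ℝ → ℝ) (hFcont : Continuous F) (hFunb : ∀ x, F x < 1)
    (Ω : ℕ → Type) (inst : ∀ K, MeasurableSpace (Ω K))
    (μ : ∀ K, Measure (Ω K)) (hprob : ∀ K, IsProbabilityMeasure (μ K))
    (X : ∀ K, Fin K → Ω K → ℝ)
    (hmeas : ∀ K k, Measurable (X K k))
    (hcdf : ∀ K (k : Fin K), cdfOf (μ K) (X K k) = F)
    (hmdep : ∀ K, MDepFam (μ K) m (X K))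
    (M : ℕ → ℕ)
    (hM0 : Tendsto (fun K => (M K : ℝ) / K) atTop (nhds 0))
    (hM : ∀ K : ℕ, ((m : ℝ) + 1) * (Real.exp 1 + ε) * Real.log K ≤ M K) :
    ∃ K₀ : ℕ, ∀ K : ℕ, K₀ < K →
      (μ K {ω | tailQuantile F ((M K : ℝ) / (Real.exp 1 * ((K : ℝ) + m + 1))) <
            orderStat (fun k => X K k ω) (K - M K + 1)} ≤
        ENNReal.ofReal (((m : ℝ) + 1) / (K : ℝ) ^ (1 + ε / 3))) ∧
      ∀ E : Finset (Fin K),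
        μ K {ω | ∀ k ∈ E, X K k ω < orderStat (fun k => X K k ω) (K - M K + 1)} ≤
          ENNReal.ofReal (((m : ℝ) + 1) *
              Real.exp (-((M K : ℝ) / (Real.exp 1 * ((m : ℝ) + 1))) *
                ((1 - ((m : ℝ) + 1) / K) / (1 + ((m : ℝ) + 1) / K))) +
            (1 - (M K : ℝ) / (Real.exp 1 * ((K : ℝ) + m + 1))) ^ ((E.card : ℝ) / ((m : ℝ) + 1))) := by
  classical
  obtain ⟨K₁, hK₁⟩ := eventually_atTop.mp
    (hM0.eventually (eventually_lt_nhds (by norm_num : (0:ℝ) < 1/3)))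
  refine ⟨max K₁ (m+1), fun K hK => ?_⟩
  haveI := hprob K
  haveI := hprob 1
  have hKm : m + 1 < K := lt_of_le_of_lt (le_max_right _ _) hK
  have hK2 : 2 ≤ K := by omega
  have hKpos : (0:ℝ) < K := by
    have : 0 < K := by omega
    exact_mod_cast this
  have hMK3 : (M K : ℝ) / K < 1/3 := hK₁ K (le_of_lt (lt_of_le_of_lt (le_max_left _ _) hK))
  set e1 := Real.exp 1 with he1def
  have he1_gt : (2:ℝ) < e1 := lt_trans (by norm_num) Real.exp_one_gt_d9
  have he1_lt : e1 < 3 := lt_trans Real.exp_one_lt_d9 (by norm_num)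
  have hm1 : (0:ℝ) < (m:ℝ) + 1 := by positivity
  have hlogK : 0 < Real.log K := Real.log_pos (by exact_mod_cast hK2)
  have hMpos : 0 < M K := by
    have h1 := hM K
    have h2 : (0:ℝ) < ((m:ℝ)+1) * (Real.exp 1 + ε) * Real.log K := by positivity
    have h3 : (0:ℝ) < (M K : ℝ) := lt_of_lt_of_le h2 h1
    exact_mod_cast h3
  have hMleK : M K ≤ K := by
    have : (M K : ℝ) ≤ (K : ℝ) := by
      rw [div_lt_iff₀ hKpos] at hMK3
      nlinarith
    exact_mod_cast this
  set p := (M K : ℝ) / (e1 * ((K : ℝ) + m + 1)) with hpdef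
  have hKm1pos : (0:ℝ) < (K:ℝ) + m + 1 := by positivity
  have he1pos : (0:ℝ) < e1 := Real.exp_pos 1
  have hp0 : 0 < p := by
    apply div_pos _ (by positivity)
    exact_mod_cast hMpos
  have hp13 : p ≤ 1/3 := by
    have hle : p ≤ (M K : ℝ) / K :=
      div_le_div_of_nonneg_left (by positivity) hKpos (by nlinarith)
    linarith
  set δ := tailQuantile F p with hδdef
  have hcdflim := cdfOf_tendsto (μ 1) (X 1 0) (hmeas 1 0)
  rw [hcdf 1 0] at hcdflim
  obtain ⟨hFδ, hFlt⟩ := tq_facts F hFcont hcdflim.1 hcdflim.2 p hp0 (by linarith)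
  have hF_eq : ∀ (k : Fin K) (x : ℝ), F x = (μ K {ω | X K k ω ≤ x}).toReal := by
    intro k x
    rw [← hcdf K k]
    rfl
  have htail : ∀ k : Fin K, (μ K {ω | δ < X K k ω}).toReal ≤ p := by
    intro k
    have hAc : {ω | δ < X K k ω} = {ω | X K k ω ≤ δ}ᶜ := by
      ext ω; simp [not_le]
    have hAm : MeasurableSet {ω | X K k ω ≤ δ} :=
      measurableSet_le (hmeas K k) measurable_const
    rw [hAc, measure_compl hAm (measure_ne_top _ _), measure_univ,
      ENNReal.toReal_sub_of_le prob_le_one ENNReal.one_ne_top]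
    have h1 := hF_eq k δ
    rw [ENNReal.toReal_one, ← h1]
    linarith
  have hlow : ∀ k : Fin K, μ K {ω | X K k ω < δ} ≤ ENNReal.ofReal (1-p) := by
    intro k
    apply meas_lt_le (μ K) (X K k) δ (1-p) (by linarith)
    intro x hx
    rw [← hF_eq k x]
    exact le_of_lt (hFlt x hx)
  set res : Fin K → Fin (m+1) := fun k => ⟨(k:ℕ) % (m+1), Nat.mod_lt _ (Nat.succ_pos m)⟩
    with hresdef
  have hres_val : ∀ (k : Fin K) (r : Fin (m+1)), res k = r → (k:ℕ) % (m+1) = (r:ℕ) := by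
    intro k r h
    exact congrArg Fin.val h
  have hspacing : ∀ (S : Finset (Fin K)) (r : Fin (m+1)), (∀ k ∈ S, res k = r) →
      ∀ i ∈ S, ∀ j ∈ S, i ≠ j → (m : ℤ) < |(i : ℤ) - (j : ℤ)| := by
    intro S r hSr i hi j hj hij
    exact spacing_of_mod hij ((hres_val i r (hSr i hi)).trans (hres_val j r (hSr j hj)).symm)
  set t : ℕ := (M K + m) / (m+1) with htdef
  have ht_low : M K ≤ (m+1) * t := by
    have h1 := Nat.div_add_mod (M K + m) (m+1)
    have h2 : (M K + m) % (m+1) ≤ m := Nat.lt_succ_iff.mp (Nat.mod_lt _ (Nat.succ_pos m))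
    generalize hgen : (m+1) * t = a at h1 ⊢
    omega
  have ht_up : (m+1) * t ≤ M K + m := Nat.mul_div_le _ _
  have ht_real : (M K : ℝ) / ((m:ℝ)+1) ≤ (t:ℝ) := by
    rw [div_le_iff₀ hm1]
    have h1 : (M K : ℝ) ≤ ((m:ℝ)+1) * t := by exact_mod_cast ht_low
    linarith
  set Cl : Fin (m+1) → Finset (Fin K) := fun r => Finset.univ.filter (fun k => res k = r)
    with hCldef
  have hCl_card : ∀ r, ((Cl r).card : ℝ) ≤ ((K:ℝ) + m + 1) / ((m:ℝ)+1) := by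
    intro r
    have h1 : (Cl r).card ≤ K / (m+1) + 1 :=
      class_card_le (Cl r) (r:ℕ) (fun k hk => hres_val k r (Finset.mem_filter.mp hk).2)
    have h2 : (m+1) * (Cl r).card ≤ K + m + 1 := by
      calc (m+1) * (Cl r).card ≤ (m+1) * (K / (m+1) + 1) := Nat.mul_le_mul_left _ h1
      _ = (m+1) * (K / (m+1)) + (m+1) := by ring
      _ ≤ K + (m+1) := by
          have := Nat.mul_div_le K (m+1)
          omega
      _ = K + m + 1 := by omega
    rw [le_div_iff₀ hm1]
    have h3 : (((m+1) * (Cl r).card : ℕ) : ℝ) ≤ ((K + m + 1 : ℕ) : ℝ) := by exact_mod_cast h2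
    push_cast at h3
    linarith
  set A := {ω | δ < orderStat (fun k => X K k ω) (K - M K + 1)} with hAdef
  set B : Fin (m+1) → Set (Ω K) :=
    fun r => {ω | (t : ℝ) ≤ ∑ k ∈ Cl r, (if δ < X K k ω then (1:ℝ) else 0)} with hBdef
  have hAsub : A ⊆ ⋃ r, B r := by
    intro ω hω
    have hcount : M K ≤ (Finset.univ.filter fun k => δ < X K k ω).card :=
      count_ge_of_orderStat_gt _ δ (M K) hMpos hMleK hω
    have hfib : (Finset.univ.filter fun k => δ < X K k ω).card =
        ∑ r : Fin (m+1), ((Finset.univ.filter fun k => δ < X K k ω).filter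
          (fun k => res k = r)).card :=
      Finset.card_eq_sum_card_fiberwise (fun x _ => Finset.mem_univ (res x))
    have hex : ∃ r, t ≤ ((Finset.univ.filter fun k => δ < X K k ω).filter
        (fun k => res k = r)).card := by
      by_contra hcon
      push_neg at hcon
      have hsum : ∑ r : Fin (m+1), ((Finset.univ.filter fun k => δ < X K k ω).filter
          (fun k => res k = r)).card ≤ ∑ _r : Fin (m+1), (t-1) :=
        Finset.sum_le_sum (fun r _ => by have := hcon r; omega)
      rw [Finset.sum_const, Finset.card_univ, Fintype.card_fin, smul_eq_mul] at hsum
      rw [← hfib] at hsum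
      have ht1 : 1 ≤ t := (Nat.one_le_div_iff (Nat.succ_pos m)).mpr (by omega)
      obtain ⟨t', ht'⟩ : ∃ t', t = t' + 1 := ⟨t-1, by omega⟩
      rw [ht'] at hsum ht_low ht_up
      have hmul1 : (m+1) * (t' + 1) = (m+1) * t' + (m+1) := by ring
      have hmul2 : (m+1) * (t' + 1 - 1) = (m+1) * t' := by norm_num
      generalize hgen : (m+1) * t' = a at hmul1 hmul2 ht_low ht_up
      rw [hmul2] at hsum
      omega
    obtain ⟨r, hr⟩ := hex
    rw [Finset.filter_comm] at hr
    refine Set.mem_iUnion.mpr ⟨r, ?_⟩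
    show (t : ℝ) ≤ ∑ k ∈ Cl r, (if δ < X K k ω then (1:ℝ) else 0)
    rw [Finset.sum_boole]
    exact_mod_cast hr
  have hBr : ∀ r, μ K (B r) ≤ ENNReal.ofReal (Real.exp (-((M K : ℝ) / (e1 * ((m:ℝ)+1))))) := by
    intro r
    have hind := hmdep K (Cl r) (hspacing (Cl r) r
      (fun k hk => (Finset.mem_filter.mp hk).2))
    have hch := class_chernoff (μ := μ K) (X K) (hmeas K) (Cl r) hind δ p hp0.le htail t
    refine (ENNReal.le_ofReal_iff_toReal_le (measure_ne_top _ _) (Real.exp_pos _).le).mpr ?_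
    refine hch.trans (Real.exp_le_exp.mpr ?_)
    have hpn : p * (Cl r).card ≤ (M K : ℝ) / (e1 * ((m:ℝ)+1)) := by
      have h1 : p * (Cl r).card ≤ p * (((K:ℝ) + m + 1) / ((m:ℝ)+1)) :=
        mul_le_mul_of_nonneg_left (hCl_card r) hp0.le
      have h2 : p * (((K:ℝ) + m + 1) / ((m:ℝ)+1)) = (M K : ℝ) / (e1 * ((m:ℝ)+1)) := by
        rw [hpdef]
        field_simp
      linarith
    have key : (M K : ℝ) / ((m:ℝ)+1) - (e1 - 1) * ((M K : ℝ) / (e1 * ((m:ℝ)+1)))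
        = (M K : ℝ) / (e1 * ((m:ℝ)+1)) := by
      field_simp
      ring
    linarith [mul_le_mul_of_nonneg_left hpn (by linarith : (0:ℝ) ≤ e1 - 1), ht_real]
  have hA_bound : μ K A ≤
      ENNReal.ofReal (((m:ℝ)+1) * Real.exp (-((M K : ℝ) / (e1 * ((m:ℝ)+1))))) := by
    calc μ K A ≤ μ K (⋃ r, B r) := measure_mono hAsub
    _ ≤ ∑ r : Fin (m+1), μ K (B r) := measure_iUnion_fintype_le _ _
    _ ≤ ∑ _r : Fin (m+1), ENNReal.ofReal (Real.exp (-((M K : ℝ) / (e1 * ((m:ℝ)+1))))) :=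
      Finset.sum_le_sum (fun r _ => hBr r)
    _ = ENNReal.ofReal (((m:ℝ)+1) * Real.exp (-((M K : ℝ) / (e1 * ((m:ℝ)+1))))) := by
      rw [Finset.sum_const, Finset.card_univ, Fintype.card_fin, nsmul_eq_mul]
      rw [← ENNReal.ofReal_natCast (m+1), ← ENNReal.ofReal_mul (by positivity)]
      norm_num
  constructor
  · -- part (i)
    refine hA_bound.trans (ENNReal.ofReal_le_ofReal ?_)
    have hexp : Real.exp (-((M K : ℝ) / (e1 * ((m:ℝ)+1)))) ≤ ((K:ℝ) ^ (1 + ε/3))⁻¹ := by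
      have hrpow : (K:ℝ) ^ (1 + ε/3) = Real.exp (Real.log K * (1 + ε/3)) :=
        Real.rpow_def_of_pos hKpos _
      rw [hrpow, ← Real.exp_neg, Real.exp_le_exp, neg_le_neg_iff]
      have hMge := hM K
      have hcoef : (1 + ε/3) * e1 ≤ e1 + ε := by nlinarith
      have h1 : (1 + ε/3) * Real.log K * (e1 * ((m:ℝ)+1)) ≤ (M K : ℝ) := by
        have h2 : ((1 + ε/3) * e1) * (((m:ℝ)+1) * Real.log K)
            ≤ (e1 + ε) * (((m:ℝ)+1) * Real.log K) :=
          mul_le_mul_of_nonneg_right hcoef (by positivity)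
        have e1' : (1 + ε/3) * Real.log K * (e1*((m:ℝ)+1))
            = ((1+ε/3)*e1) * (((m:ℝ)+1)*Real.log K) := by ring
        have e2' : (e1 + ε) * (((m:ℝ)+1) * Real.log K)
            = ((m:ℝ)+1)*(e1+ε)*Real.log K := by ring
        linarith
      rw [le_div_iff₀ (by positivity)]
      have e3' : Real.log K * (1+ε/3) * (e1*((m:ℝ)+1))
          = (1 + ε/3) * Real.log K * (e1*((m:ℝ)+1)) := by ring
      linarith
    have h2 : ((m:ℝ)+1) * Real.exp (-((M K : ℝ) / (e1 * ((m:ℝ)+1))))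
        ≤ ((m:ℝ)+1) * ((K:ℝ) ^ (1 + ε/3))⁻¹ := mul_le_mul_of_nonneg_left hexp hm1.le
    rw [div_eq_mul_inv]
    exact h2
  · -- part (ii)
    intro E
    have hratio0 : 0 ≤ (1 - ((m:ℝ)+1)/K) / (1 + ((m:ℝ)+1)/K) := by
      apply div_nonneg
      · have h1 : ((m:ℝ)+1)/K ≤ 1 := by
          rw [div_le_one hKpos]
          have : ((m:ℕ):ℝ) + 1 ≤ (K:ℝ) := by exact_mod_cast hKm.le
          linarith
        linarith
      · positivity
    have hratio1 : (1 - ((m:ℝ)+1)/K) / (1 + ((m:ℝ)+1)/K) ≤ 1 := by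
      rw [div_le_one (by positivity)]
      have h1 : 0 < ((m:ℝ)+1)/K := by positivity
      linarith
    have hx0 : 0 ≤ (M K : ℝ)/(e1*((m:ℝ)+1)) := by positivity
    have hterm1 : Real.exp (-((M K : ℝ)/(e1*((m:ℝ)+1)))) ≤
        Real.exp (-((M K : ℝ)/(e1*((m:ℝ)+1))) * ((1 - ((m:ℝ)+1)/K)/(1 + ((m:ℝ)+1)/K))) := by
      rw [Real.exp_le_exp]
      have hmm := mul_nonneg hx0 (sub_nonneg.mpr hratio1)
      nlinarith [hmm]
    have hA_bound2 : μ K A ≤ ENNReal.ofReal (((m:ℝ)+1) *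
        Real.exp (-((M K : ℝ)/(e1*((m:ℝ)+1))) *
          ((1 - ((m:ℝ)+1)/K)/(1 + ((m:ℝ)+1)/K)))) :=
      hA_bound.trans (ENNReal.ofReal_le_ofReal (mul_le_mul_of_nonneg_left hterm1 hm1.le))
    by_cases hEe : E.card = 0
    · have hrpow0 : (1-p) ^ ((E.card : ℝ)/((m:ℝ)+1)) = 1 := by
        rw [hEe]
        norm_num
      rw [hrpow0]
      calc μ K {ω | ∀ k ∈ E, X K k ω < orderStat (fun k => X K k ω) (K - M K + 1)} ≤ 1 :=
        prob_le_one
      _ ≤ ENNReal.ofReal (((m:ℝ)+1) * Real.exp (-((M K : ℝ)/(e1*((m:ℝ)+1))) *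
            ((1 - ((m:ℝ)+1)/K)/(1 + ((m:ℝ)+1)/K))) + 1) := by
          rw [← ENNReal.ofReal_one]
          apply ENNReal.ofReal_le_ofReal
          have hep := Real.exp_pos (-((M K : ℝ)/(e1*((m:ℝ)+1))) *
            ((1 - ((m:ℝ)+1)/K)/(1 + ((m:ℝ)+1)/K)))
          nlinarith [hep, hm1]
    · have hEpos : 0 < E.card := Nat.pos_of_ne_zero hEe
      have hfibE : E.card = ∑ r : Fin (m+1), (E.filter (fun k => res k = r)).card :=
        Finset.card_eq_sum_card_fiberwise (fun x _ => Finset.mem_univ (res x))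
      have hex : ∃ r : Fin (m+1), E.card ≤ (m+1) * (E.filter (fun k => res k = r)).card := by
        by_contra hcon
        push_neg at hcon
        have h2 : ∑ r : Fin (m+1), ((m+1) * (E.filter (fun k => res k = r)).card + 1)
            ≤ ∑ _r : Fin (m+1), E.card :=
          Finset.sum_le_sum (fun r _ => by have := hcon r; omega)
        rw [Finset.sum_add_distrib, ← Finset.mul_sum, ← hfibE, Finset.sum_const,
          Finset.sum_const, Finset.card_univ, Fintype.card_fin, smul_eq_mul,
          smul_eq_mul, mul_one] at h2
        generalize hgen : (m+1) * E.card = a at h2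
        omega
      obtain ⟨r, hr⟩ := hex
      set S := E.filter (fun k => res k = r) with hSdef
      have hSE : S ⊆ E := Finset.filter_subset _ _
      have hind := hmdep K S (hspacing S r (fun k hk => (Finset.mem_filter.mp hk).2))
      set D := ⋂ i ∈ (Finset.univ : Finset ↥S), (X K i.1) ⁻¹' (Set.Iio δ) with hDdef
      have hDsub : {ω | ∀ k ∈ E, X K k ω < orderStat (fun k => X K k ω) (K - M K + 1)}
          ⊆ A ∪ D := by
        intro ω hω
        by_cases hord : δ < orderStat (fun k => X K k ω) (K - M K + 1)
        · exact Or.inl hord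
        · right
          refine Set.mem_iInter₂.mpr (fun i _ => ?_)
          have hXi := hω i.1 (hSE i.2)
          simp only [Set.mem_preimage, Set.mem_Iio]
          push_neg at hord
          linarith
      have hDprod : μ K D = ∏ i ∈ (Finset.univ : Finset ↥S), μ K (X K i.1 ⁻¹' (Set.Iio δ)) :=
        hind.measure_inter_preimage_eq_mul Finset.univ (fun i _ => measurableSet_Iio)
      have hDle : μ K D ≤ ENNReal.ofReal ((1-p) ^ ((E.card:ℝ)/((m:ℝ)+1))) := by
        rw [hDprod]
        calc ∏ i ∈ (Finset.univ : Finset ↥S), μ K (X K i.1 ⁻¹' (Set.Iio δ))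
            ≤ ∏ _i ∈ (Finset.univ : Finset ↥S), ENNReal.ofReal (1-p) :=
          Finset.prod_le_prod' (fun i _ => hlow i.1)
        _ = ENNReal.ofReal (1-p) ^ S.card := by
            rw [Finset.prod_const, Finset.card_univ, Fintype.card_coe]
        _ = ENNReal.ofReal ((1-p) ^ S.card) := (ENNReal.ofReal_pow (by linarith) _).symm
        _ ≤ ENNReal.ofReal ((1-p) ^ ((E.card:ℝ)/((m:ℝ)+1))) := by
            apply ENNReal.ofReal_le_ofReal
            rw [← Real.rpow_natCast (1-p) S.card]
            apply Real.rpow_le_rpow_of_exponent_ge (by linarith) (by linarith)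
            rw [div_le_iff₀ hm1]
            have h3 : (E.card : ℝ) ≤ (((m+1) * S.card : ℕ) : ℝ) := by exact_mod_cast hr
            push_cast at h3
            linarith
      calc μ K {ω | ∀ k ∈ E, X K k ω < orderStat (fun k => X K k ω) (K - M K + 1)}
          ≤ μ K (A ∪ D) := measure_mono hDsub
      _ ≤ μ K A + μ K D := measure_union_le _ _
      _ ≤ ENNReal.ofReal (((m:ℝ)+1) * Real.exp (-((M K : ℝ)/(e1*((m:ℝ)+1))) *
            ((1 - ((m:ℝ)+1)/K)/(1 + ((m:ℝ)+1)/K)))) +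
          ENNReal.ofReal ((1-p) ^ ((E.card:ℝ)/((m:ℝ)+1))) := add_le_add hA_bound2 hDle
      _ = ENNReal.ofReal (((m:ℝ)+1) * Real.exp (-((M K : ℝ)/(e1*((m:ℝ)+1))) *
            ((1 - ((m:ℝ)+1)/K)/(1 + ((m:ℝ)+1)/K))) +
          (1-p) ^ ((E.card:ℝ)/((m:ℝ)+1))) := by
          rw [← ENNReal.ofReal_add (by positivity) (Real.rpow_nonneg (by linarith) _)]
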